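/- For any subset S of vertices of the n-dimensional hypercube graph with |S| < 2^n/(n^2+1), the largest connected component of the complement V \ S has more than 2^{n-1} vertices. -/

import Mathlib

set_option maxHeartbeats 1000000


def flipAt (n : ℕ) (s : Fin n → Bool) (i : Fin n) : Fin n → Bool :=
  Function.update s i (!(s i))

open Finset

/-- directed edge boundary of `A` -/
def bdry (n : ℕ) (A : Finset (Fin n → Bool)) : Finset ((Fin n → Bool) × Fin n) :=
  (A ×ˢ Finset.univ).filter (fun p => flipAt n p.1 p.2 ∉ A)

lemma mem_bdry {n : ℕ} {A : Finset (Fin n → Bool)} {p : (Fin n → Bool) × Fin n} :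
    p ∈ bdry n A ↔ p.1 ∈ A ∧ flipAt n p.1 p.2 ∉ A := by
  simp [bdry]

lemma flipAt_flip_flip (n : ℕ) (x : Fin n → Bool) (i : Fin n) : flipAt n (flipAt n x i) i = x := by
  simp [flipAt, Function.update_idem]

lemma flip_apply (n : ℕ) (x : Fin n → Bool) (i : Fin n) : flipAt n x i i = !(x i) := by
  simp [flipAt]

lemma flip_ne (n : ℕ) (x : Fin n → Bool) (i : Fin n) : flipAt n x i ≠ x := by
  intro h
  have := congrFun h i
  rw [flip_apply] at this
  simp at this

def bcons {n : ℕ} (b : Bool) (y : Fin n → Bool) : Fin (n+1) → Bool := Fin.cons b y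

lemma bcons_zero {n : ℕ} (b : Bool) (y : Fin n → Bool) : bcons b y 0 = b := rfl

lemma bcons_succ {n : ℕ} (b : Bool) (y : Fin n → Bool) (i : Fin n) : bcons b y i.succ = y i :=
  @Fin.cons_succ n (fun _ => Bool) b y i

lemma bcons_inj {n : ℕ} (b : Bool) : Function.Injective (bcons (n := n) b) :=
  @Fin.cons_right_injective n (fun _ => Bool) b

lemma flip_cons_succ {n : ℕ} (b : Bool) (y : Fin n → Bool) (i : Fin n) :
    flipAt (n+1) (bcons b y) i.succ = bcons b (flipAt n y i) := by
  unfold flipAt bcons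
  rw [Fin.cons_succ, Fin.cons_update]

lemma flip_cons_zero {n : ℕ} (b : Bool) (y : Fin n → Bool) :
    flipAt (n+1) (bcons b y) 0 = bcons (!b) y := by
  unfold flipAt bcons
  rw [Fin.cons_zero, Fin.update_cons_zero]

lemma card_half {n : ℕ} (b : Bool) (A : Finset (Fin (n+1) → Bool)) :
    (A.filter (fun x => x 0 = b)).card = (univ.filter fun y => bcons b y ∈ A).card := by
  apply Finset.card_bij' (i := fun x _ => Fin.tail x) (j := fun y _ => bcons b y)
  · intro x hx
    simp only [mem_filter, mem_univ, true_and] at hx ⊢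
    have hcx : bcons b (Fin.tail x) = x := by
      unfold bcons; rw [← hx.2]; exact Fin.cons_self_tail x
    rw [hcx]; exact hx.1
  · intro y hy
    simp only [mem_filter, mem_univ, true_and] at hy ⊢
    exact ⟨hy, rfl⟩
  · intro x hx
    simp only [mem_filter] at hx
    unfold bcons; rw [← hx.2]
    exact Fin.cons_self_tail x
  · intro y _
    exact Fin.tail_cons _ _

lemma card_split {n : ℕ} (A : Finset (Fin (n+1) → Bool)) :
    A.card = (univ.filter fun y => bcons false y ∈ A).card
      + (univ.filter fun y => bcons true y ∈ A).card := by
  rw [← card_half, ← card_half]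
  rw [← Finset.card_filter_add_card_filter_not (p := fun x => x 0 = false) (s := A)]
  have : (A.filter fun x => ¬ (x 0 = false)) = A.filter (fun x => x 0 = true) := by
    apply Finset.filter_congr
    intro x _
    cases h : x 0 <;> simp [h]
  rw [this]

lemma compl_half {n : ℕ} (b : Bool) (A : Finset (Fin (n+1) → Bool)) :
    (univ.filter fun y => bcons b y ∈ Aᶜ) = (univ.filter fun y => bcons b y ∈ A)ᶜ := by
  ext y; simp

def consPair {n : ℕ} (b : Bool) (p : (Fin n → Bool) × Fin n) : (Fin (n+1) → Bool) × Fin (n+1) :=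
  (bcons b p.1, Fin.succ p.2)

def consPt {n : ℕ} (b : Bool) (y : Fin n → Bool) : (Fin (n+1) → Bool) × Fin (n+1) :=
  (bcons b y, 0)

lemma consPair_inj {n : ℕ} (b : Bool) : Function.Injective (consPair (n := n) b) := by
  intro p q h
  simp only [consPair, Prod.mk.injEq] at h
  exact Prod.ext (bcons_inj b h.1) (Fin.succ_injective n h.2)

lemma consPt_inj {n : ℕ} (b : Bool) : Function.Injective (consPt (n := n) b) := by
  intro p q h
  simp only [consPt, Prod.mk.injEq] at h
  exact bcons_inj b h.1

theorem key (n : ℕ) (A : Finset (Fin n → Bool)) :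
    2 * A.card * Aᶜ.card ≤ 2 ^ n * (bdry n A).card := by
  induction n with
  | zero =>
    have h1 : A.card ≤ 1 := by
      have := Finset.card_le_univ A
      simpa using this
    have h2 : Aᶜ.card = 1 - A.card := by
      rw [Finset.card_compl]
      simp
    set a := A.card with ha
    interval_cases a <;> simp [h2]
  | succ n ih =>
    set A0 := (univ.filter fun y => bcons false y ∈ A) with hA0
    set A1 := (univ.filter fun y => bcons true y ∈ A) with hA1
    have e0 := ih A0
    have e1 := ih A1
    set B0 := (bdry n A0).image (consPair false) with hB0
    set B1 := (bdry n A1).image (consPair true) with hB1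
    set C0 := (A0 \ A1).image (consPt false) with hC0
    set C1 := (A1 \ A0).image (consPt true) with hC1
    have hsub : B0 ∪ B1 ∪ C0 ∪ C1 ⊆ bdry (n+1) A := by
      intro p hp
      simp only [mem_union] at hp
      rcases hp with ((hp | hp) | hp) | hp
      · obtain ⟨q, hq, rfl⟩ := Finset.mem_image.1 hp
        rw [mem_bdry] at hq ⊢
        simp only [hA0, mem_filter, mem_univ, true_and] at hq
        unfold consPair
        rw [flip_cons_succ]
        exact ⟨hq.1, by simpa using hq.2⟩
      · obtain ⟨q, hq, rfl⟩ := Finset.mem_image.1 hp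
        rw [mem_bdry] at hq ⊢
        simp only [hA1, mem_filter, mem_univ, true_and] at hq
        unfold consPair
        rw [flip_cons_succ]
        exact ⟨hq.1, by simpa using hq.2⟩
      · obtain ⟨y, hy, rfl⟩ := Finset.mem_image.1 hp
        rw [Finset.mem_sdiff] at hy
        rw [mem_bdry]
        simp only [hA0, hA1, mem_filter, mem_univ, true_and] at hy
        unfold consPt
        rw [flip_cons_zero]
        exact ⟨hy.1, by simpa using hy.2⟩
      · obtain ⟨y, hy, rfl⟩ := Finset.mem_image.1 hp
        rw [Finset.mem_sdiff] at hy
        rw [mem_bdry]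
        simp only [hA0, hA1, mem_filter, mem_univ, true_and] at hy
        unfold consPt
        rw [flip_cons_zero]
        exact ⟨hy.1, by simpa using hy.2⟩
    have dBB : Disjoint B0 B1 := by
      rw [Finset.disjoint_left]
      rintro p hp0 hp1
      obtain ⟨q, _, rfl⟩ := Finset.mem_image.1 hp0
      obtain ⟨r, _, h⟩ := Finset.mem_image.1 hp1
      have := congrFun (congrArg Prod.fst h) 0
      simp [consPair, bcons_zero] at this
    have dCC : Disjoint C0 C1 := by
      rw [Finset.disjoint_left]
      rintro p hp0 hp1
      obtain ⟨q, _, rfl⟩ := Finset.mem_image.1 hp0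
      obtain ⟨r, _, h⟩ := Finset.mem_image.1 hp1
      have := congrFun (congrArg Prod.fst h) 0
      simp [consPt, bcons_zero] at this
    have dBC : ∀ (b b' : Bool) (E : Finset ((Fin n → Bool) × Fin n)) (F : Finset (Fin n → Bool)),
        Disjoint (E.image (consPair b)) (F.image (consPt b')) := by
      intro b b' E F
      rw [Finset.disjoint_left]
      rintro p hp0 hp1
      obtain ⟨q, _, rfl⟩ := Finset.mem_image.1 hp0
      obtain ⟨r, _, h⟩ := Finset.mem_image.1 hp1
      have := congrArg Prod.snd h
      simp only [consPair, consPt] at this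
      exact Fin.succ_ne_zero _ this.symm
    have hcard : B0.card + B1.card + C0.card + C1.card ≤ (bdry (n+1) A).card := by
      have d1 : Disjoint (B0 ∪ B1) C0 := by
        rw [Finset.disjoint_union_left]
        exact ⟨(dBC _ _ _ _).symm.symm, dBC _ _ _ _⟩
      have d2 : Disjoint (B0 ∪ B1 ∪ C0) C1 := by
        rw [Finset.disjoint_union_left, Finset.disjoint_union_left]
        exact ⟨⟨dBC _ _ _ _, dBC _ _ _ _⟩, dCC⟩
      calc B0.card + B1.card + C0.card + C1.card
          = (B0 ∪ B1 ∪ C0 ∪ C1).card := by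
            rw [Finset.card_union_of_disjoint d2, Finset.card_union_of_disjoint d1,
              Finset.card_union_of_disjoint dBB]
        _ ≤ (bdry (n+1) A).card := Finset.card_le_card hsub
    rw [Finset.card_image_of_injective _ (consPair_inj _)] at hcard
    rw [Finset.card_image_of_injective _ (consPair_inj _)] at hcard
    rw [Finset.card_image_of_injective _ (consPt_inj _)] at hcard
    rw [Finset.card_image_of_injective _ (consPt_inj _)] at hcard
    -- arithmetic
    have hsplitA := card_split A
    have hsplitAc := card_split Aᶜ
    rw [compl_half, compl_half, ← hA0, ← hA1] at hsplitAc
    rw [← hA0, ← hA1] at hsplitA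
    have hc0 : A0.card ≤ (A0 \ A1).card + A1.card := Finset.card_le_card_sdiff_add_card
    have hc1 : A1.card ≤ (A1 \ A0).card + A0.card := Finset.card_le_card_sdiff_add_card
    have ht0 : A0.card + A0ᶜ.card = 2 ^ n := by
      rw [Finset.card_add_card_compl]
      simp [Fintype.card_fun]
    have ht1 : A1.card + A1ᶜ.card = 2 ^ n := by
      rw [Finset.card_add_card_compl]
      simp [Fintype.card_fun]
    -- pass to integers
    rw [hsplitA, hsplitAc]
    set a0 := A0.card; set a1 := A1.card; set b0 := A0ᶜ.card; set b1 := A1ᶜ.card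
    set f0 := (bdry n A0).card; set f1 := (bdry n A1).card
    set c0 := (A0 \ A1).card; set c1 := (A1 \ A0).card
    set E := (bdry (n+1) A).card
    zify at e0 e1 hc0 hc1 ht0 ht1 hcard ⊢
    have hp : (0:ℤ) < 2 ^ n := by positivity
    have hb0 : (b0:ℤ) = 2 ^ n - a0 := by linarith
    have hb1 : (b1:ℤ) = 2 ^ n - a1 := by linarith
    have ha0 : (0:ℤ) ≤ a0 := Int.natCast_nonneg _
    have ha1 : (0:ℤ) ≤ a1 := Int.natCast_nonneg _
    have ha0' : (a0:ℤ) ≤ 2 ^ n := by linarith [Int.natCast_nonneg b0]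
    have ha1' : (a1:ℤ) ≤ 2 ^ n := by linarith [Int.natCast_nonneg b1]
    have hd1 : (a0:ℤ) - a1 ≤ c0 + c1 := by linarith [Int.natCast_nonneg c1]
    have hd2 : (a1:ℤ) - a0 ≤ c0 + c1 := by linarith [Int.natCast_nonneg c0]
    have hsq : ((a0:ℤ) - a1)^2 ≤ 2 ^ n * (c0 + c1) := by
      nlinarith [mul_nonneg (sub_nonneg.2 hd1) (sub_nonneg.2 (by linarith : (a1:ℤ) - a0 ≤ 2 ^ n)),
        mul_nonneg (sub_nonneg.2 hd2) (sub_nonneg.2 (by linarith : (a0:ℤ) - a1 ≤ 2 ^ n))]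
    have hprod : (2:ℤ) ^ n * (f0 + f1 + (c0 + c1)) ≤ 2 ^ n * E := by
      apply mul_le_mul_of_nonneg_left _ (le_of_lt hp)
      linarith
    have hpow : (2:ℤ) ^ (n+1) = 2 * 2 ^ n := by ring
    rw [hpow, hb0, hb1]
    rw [hb0] at e0
    rw [hb1] at e1
    nlinarith [e0, e1, hsq, hprod]


def cube (n : ℕ) : SimpleGraph (Fin n → Bool) :=
  SimpleGraph.fromRel (fun s t => ∃ i, t = flipAt n s i)

def IsCompOf (n : ℕ) (A C : Set (Fin n → Bool)) : Prop :=
  C.Nonempty ∧ C ⊆ A ∧ ((cube n).induce C).Connected ∧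
    ∀ D, C ⊆ D → D ⊆ A → ((cube n).induce D).Connected → D = C

lemma flip_apply' (n : ℕ) (x : Fin n → Bool) (i : Fin n) : flipAt n x i i = !(x i) := by
  simp [flipAt]

lemma flip_ne' (n : ℕ) (x : Fin n → Bool) (i : Fin n) : flipAt n x i ≠ x := by
  intro h
  have := congrFun h i
  rw [flip_apply'] at this
  simp at this

lemma cube_adj_flip (n : ℕ) (x : Fin n → Bool) (i : Fin n) : (cube n).Adj x (flipAt n x i) := by
  rw [cube, SimpleGraph.fromRel_adj]
  exact ⟨(flip_ne' n x i).symm, Or.inl ⟨i, rfl⟩⟩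

section Transfer
variable {V : Type*} {G : SimpleGraph V}

lemma induce_adj' {A : Set V} {u v : ↥A} : (G.induce A).Adj u v ↔ G.Adj ↑u ↑v := Iff.rfl

/-- transfer a walk in the subgraph induced on `B` to reachability in the graph induced
on `A`, provided all vertices of the walk lie in `A`. -/
lemma reach_transfer {A B : Set V} : ∀ {p q : ↥B} (w : (G.induce B).Walk p q),
    (∀ z ∈ w.support, (z : V) ∈ A) → ∀ (hp : ↑p ∈ A) (hq : ↑q ∈ A),
    (G.induce A).Reachable ⟨p, hp⟩ ⟨q, hq⟩ := by
  intro p q w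
  induction w with
  | nil =>
    intro _ hp hq
    exact SimpleGraph.Reachable.refl _
  | @cons u v q hadj w ih =>
    intro hsup hp hq
    have hv : (v : V) ∈ A := by
      apply hsup
      simp [SimpleGraph.Walk.support_cons]
    have h1 : (G.induce A).Adj ⟨u, hp⟩ ⟨v, hv⟩ := hadj
    refine (h1.reachable).trans (ih ?_ hv hq)
    intro z hz
    exact hsup z (by simp [SimpleGraph.Walk.support_cons, hz])

end Transfer

/-- the connected component of `x` inside `A` -/
def compOf (n : ℕ) (A : Set (Fin n → Bool)) (x : Fin n → Bool) : Set (Fin n → Bool) :=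
  {y | ∃ (hy : y ∈ A) (hx : x ∈ A), ((cube n).induce A).Reachable ⟨x, hx⟩ ⟨y, hy⟩}

lemma compOf_subset (n : ℕ) (A : Set (Fin n → Bool)) (x : Fin n → Bool) :
    compOf n A x ⊆ A := fun _ hy => hy.1

lemma mem_compOf_self {n : ℕ} {A : Set (Fin n → Bool)} {x : Fin n → Bool} (hx : x ∈ A) :
    x ∈ compOf n A x := ⟨hx, hx, SimpleGraph.Reachable.refl _⟩

lemma compOf_closed {n : ℕ} {A : Set (Fin n → Bool)} {x y z : Fin n → Bool}
    (hy : y ∈ compOf n A x) (hadj : (cube n).Adj y z) (hz : z ∈ A) : z ∈ compOf n A x := by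
  obtain ⟨hyA, hxA, hr⟩ := hy
  exact ⟨hz, hxA, hr.trans (SimpleGraph.Adj.reachable (by exact hadj : ((cube n).induce A).Adj ⟨y, hyA⟩ ⟨z, hz⟩))⟩

lemma compOf_eq_of_mem {n : ℕ} {A : Set (Fin n → Bool)} {x y : Fin n → Bool}
    (hy : y ∈ compOf n A x) : compOf n A y = compOf n A x := by
  obtain ⟨hyA, hxA, hr⟩ := hy
  ext z
  constructor
  · rintro ⟨hzA, _, hr2⟩
    exact ⟨hzA, hxA, hr.trans hr2⟩
  · rintro ⟨hzA, _, hr2⟩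
    exact ⟨hzA, hyA, hr.symm.trans hr2⟩

lemma compOf_isCompOf {n : ℕ} {A : Set (Fin n → Bool)} {x : Fin n → Bool} (hx : x ∈ A) :
    IsCompOf n A (compOf n A x) := by
  refine ⟨⟨x, mem_compOf_self hx⟩, compOf_subset n A x, ?_, ?_⟩
  · rw [SimpleGraph.connected_iff]
    constructor
    · rintro ⟨u, hu⟩ ⟨v, hv⟩
      obtain ⟨huA, _, hru⟩ := id hu
      obtain ⟨hvA, _, hrv⟩ := id hv
      obtain ⟨w⟩ := hru.symm.trans hrv
      refine reach_transfer w ?_ hu hv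
      intro z hz
      have : ((cube n).induce A).Reachable ⟨u, huA⟩ z :=
        ⟨(w.takeUntil z hz)⟩
      exact ⟨z.2, hx, hru.trans (by simpa using this)⟩
    · exact ⟨⟨x, mem_compOf_self hx⟩⟩
  · intro D hCD hDA hconn
    apply Set.Subset.antisymm _ hCD
    intro y hyD
    have hxD : x ∈ D := hCD (mem_compOf_self hx)
    obtain ⟨w⟩ := hconn.preconnected ⟨x, hxD⟩ ⟨y, hyD⟩
    have : ((cube n).induce A).Reachable ⟨x, hx⟩ ⟨y, hDA hyD⟩ := by
      refine reach_transfer w ?_ hx (hDA hyD)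
      intro z _
      exact hDA z.2
    exact ⟨hDA hyD, hx, this⟩

theorem stmt0 (n : ℕ) (S : Set (Fin n → Bool))
    (hS : (S.ncard : ℝ) < 2 ^ n / (n ^ 2 + 1)) :
    ∃ C : Set (Fin n → Bool), IsCompOf n Sᶜ C ∧ (C.ncard : ℝ) > 2 ^ n / 2 := by
  rcases Nat.eq_zero_or_pos n with hn | hn
  · -- n = 0
    subst hn
    have hS0 : S.ncard = 0 := by
      have : (S.ncard : ℝ) < 1 := by norm_num at hS ⊢; linarith
      exact_mod_cast Nat.lt_one_iff.1 (by exact_mod_cast this)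
    have hSe : S = ∅ := (Set.ncard_eq_zero S.toFinite).1 hS0
    refine ⟨Set.univ, ⟨Set.univ_nonempty, by simp [hSe], ?_, ?_⟩, ?_⟩
    · have : Subsingleton (Fin 0 → Bool) := ⟨fun a b => funext fun i => i.elim0⟩
      rw [SimpleGraph.connected_iff]
      exact ⟨fun u v => by rw [Subsingleton.elim u v], ⟨⟨default, trivial⟩⟩⟩
    · intro D hCD _ _
      exact Set.Subset.antisymm (Set.subset_univ D) hCD
    · have : (Set.univ : Set (Fin 0 → Bool)).ncard = 1 := by
        rw [Set.ncard_univ]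
        simp [Nat.card_eq_fintype_card]
      rw [this]
      norm_num
  · -- n ≥ 1
    by_contra hcon
    push_neg at hcon
    classical
    have hcardV : Fintype.card (Fin n → Bool) = 2 ^ n := by simp [Fintype.card_fun]
    set Sfin := S.toFinite.toFinset with hSfin
    set Scfin := (Sᶜ).toFinite.toFinset with hScfin
    set Cfin : (Fin n → Bool) → Finset (Fin n → Bool) := fun x => (compOf n Sᶜ x).toFinite.toFinset with hCfin
    set comps : Finset (Finset (Fin n → Bool)) := Scfin.image Cfin with hcomps
    have hpow2 : (2:ℝ) ^ n / 2 = ((2 ^ (n-1) : ℕ) : ℝ) := by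
      push_cast
      rw [div_eq_iff (by norm_num : (2:ℝ) ≠ 0), ← pow_succ]
      congr 1
      omega
    -- each component is small
    have hsmall : ∀ x ∈ Sᶜ, (Cfin x).card ≤ 2 ^ (n-1) := by
      intro x hx
      have hic := compOf_isCompOf (A := Sᶜ) (x := x) hx
      have := hcon _ hic
      rw [Set.ncard_eq_toFinset_card _ (Set.toFinite _), hpow2] at this
      exact_mod_cast this
    -- members of comps : description
    have hmem : ∀ c ∈ comps, ∃ x ∈ Sᶜ, c = Cfin x := by
      intro c hc
      obtain ⟨x, hx, rfl⟩ := Finset.mem_image.1 hc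
      exact ⟨x, (Sᶜ).toFinite.mem_toFinset.1 hx, rfl⟩
    have hmemCfin : ∀ x z, z ∈ Cfin x ↔ z ∈ compOf n Sᶜ x := by
      intro x z
      exact (compOf n Sᶜ x).toFinite.mem_toFinset
    -- card ≤ boundary card for components
    have hce : ∀ x ∈ Sᶜ, (Cfin x).card ≤ (bdry n (Cfin x)).card := by
      intro x hx
      have hk := key n (Cfin x)
      have hcc : (Cfin x)ᶜ.card = 2 ^ n - (Cfin x).card := by
        rw [Finset.card_compl, hcardV]
      have hs := hsmall x hx
      have hsplit : (2:ℕ) ^ n = 2 ^ (n-1) + 2 ^ (n-1) := by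
        rw [← two_mul, ← pow_succ']
        congr 1
        omega
      have h1 : 2 * (Cfin x).card * 2 ^ (n-1) ≤ 2 * (Cfin x).card * (Cfin x)ᶜ.card :=
        Nat.mul_le_mul_left _ (by omega)
      have h2 : 2 * 2 ^ (n-1) * (Cfin x).card ≤ 2 * 2 ^ (n-1) * (bdry n (Cfin x)).card := by
        calc 2 * 2 ^ (n-1) * (Cfin x).card = 2 * (Cfin x).card * 2 ^ (n-1) := by ring
          _ ≤ 2 * (Cfin x).card * (Cfin x)ᶜ.card := h1
          _ ≤ 2 ^ n * (bdry n (Cfin x)).card := hk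
          _ = 2 * 2 ^ (n-1) * (bdry n (Cfin x)).card := by rw [show 2 * 2 ^ (n-1) = 2^n by omega]
      exact Nat.le_of_mul_le_mul_left h2 (by positivity)
    -- boundary goes into S
    have hbd : ∀ x ∈ Sᶜ, ∀ p ∈ bdry n (Cfin x), flipAt n p.1 p.2 ∈ S := by
      intro x hx p hp
      rw [mem_bdry] at hp
      by_contra hns
      have : flipAt n p.1 p.2 ∈ compOf n Sᶜ x :=
        compOf_closed ((hmemCfin x p.1).1 hp.1) (cube_adj_flip n p.1 p.2) hns
      exact hp.2 ((hmemCfin x _).2 this)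
    -- disjointness of distinct components
    have hdisj : ∀ c ∈ comps, ∀ d ∈ comps, c ≠ d → Disjoint c d := by
      intro c hc d hd hne
      obtain ⟨x, hx, rfl⟩ := hmem c hc
      obtain ⟨y, hy, rfl⟩ := hmem d hd
      rw [Finset.disjoint_left]
      intro z hzc hzd
      apply hne
      have h1 := compOf_eq_of_mem ((hmemCfin x z).1 hzc)
      have h2 := compOf_eq_of_mem ((hmemCfin y z).1 hzd)
      have hxy : compOf n Sᶜ x = compOf n Sᶜ y := by rw [← h1, h2]
      ext w
      rw [hmemCfin, hmemCfin, hxy]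
    -- partition sum
    have hsum1 : ∑ c ∈ comps, c.card = Scfin.card := by
      rw [← Finset.card_biUnion hdisj]
      congr 1
      ext z
      simp only [Finset.mem_biUnion, id]
      constructor
      · rintro ⟨c, hc, hzc⟩
        obtain ⟨x, hx, rfl⟩ := hmem c hc
        exact (Sᶜ).toFinite.mem_toFinset.2 (compOf_subset n Sᶜ x ((hmemCfin x z).1 hzc))
      · intro hz
        have hz' := (Sᶜ).toFinite.mem_toFinset.1 hz
        exact ⟨Cfin z, Finset.mem_image_of_mem _ hz, (hmemCfin z z).2 (mem_compOf_self hz')⟩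
    -- boundary sum bound
    have hbdisj : ∀ c ∈ comps, ∀ d ∈ comps, c ≠ d → Disjoint (bdry n c) (bdry n d) := by
      intro c hc d hd hne
      rw [Finset.disjoint_left]
      intro p hpc hpd
      rw [mem_bdry] at hpc hpd
      exact Finset.disjoint_left.1 (hdisj c hc d hd hne) hpc.1 hpd.1
    have hsum2 : ∑ c ∈ comps, (bdry n c).card ≤ Sfin.card * n := by
      rw [← Finset.card_biUnion hbdisj]
      set T := comps.biUnion (fun c => bdry n c) with hT
      set ψ : (Fin n → Bool) × Fin n → (Fin n → Bool) × Fin n := fun p => (flipAt n p.1 p.2, p.2) with hψ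
      have hinj : Function.Injective ψ := by
        intro p q h
        simp only [hψ, Prod.mk.injEq] at h
        have h2 := h.2
        have h1 : p.1 = q.1 := by
          have := congrArg (fun z => flipAt n z p.2) h.1
          simpa [flipAt_flip_flip, h2] using this
        exact Prod.ext h1 h2
      have himg : T.image ψ ⊆ Sfin ×ˢ Finset.univ := by
        intro q hq
        obtain ⟨p, hp, rfl⟩ := Finset.mem_image.1 hq
        obtain ⟨c, hc, hpc⟩ := Finset.mem_biUnion.1 hp
        obtain ⟨x, hx, rfl⟩ := hmem c hc
        rw [Finset.mem_product]
        exact ⟨S.toFinite.mem_toFinset.2 (hbd x hx p hpc), Finset.mem_univ _⟩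
      calc T.card = (T.image ψ).card := (Finset.card_image_of_injective _ hinj).symm
        _ ≤ (Sfin ×ˢ Finset.univ).card := Finset.card_le_card himg
        _ = Sfin.card * n := by rw [Finset.card_product]; simp
    -- combine
    have hchain : Scfin.card ≤ Sfin.card * n := by
      rw [← hsum1]
      refine le_trans (Finset.sum_le_sum ?_) hsum2
      intro c hc
      obtain ⟨x, hx, rfl⟩ := hmem c hc
      exact hce x hx
    have htot : Sfin.card + Scfin.card = 2 ^ n := by
      have : Scfin = Sfinᶜ := by
        ext z
        simp [hSfin, hScfin, Set.Finite.mem_toFinset, Set.mem_compl_iff]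
      rw [this, Finset.card_add_card_compl, hcardV]
    have hfinal : 2 ^ n ≤ Sfin.card * (n + 1) := by
      calc 2 ^ n = Sfin.card + Scfin.card := htot.symm
        _ ≤ Sfin.card + Sfin.card * n := by omega
        _ = Sfin.card * (n + 1) := by ring
    -- real contradiction
    have hSc : S.ncard = Sfin.card := Set.ncard_eq_toFinset_card _ _
    have h1 : (2:ℝ) ^ n ≤ (S.ncard : ℝ) * (n + 1) := by
      rw [hSc]
      exact_mod_cast hfinal
    have hpos : (0:ℝ) < (n:ℝ)^2 + 1 := by positivity
    have h2 : (S.ncard : ℝ) * (n + 1) < 2 ^ n / ((n:ℝ)^2 + 1) * (n + 1) :=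
      mul_lt_mul_of_pos_right hS (by positivity)
    have h3 : (2:ℝ) ^ n / ((n:ℝ)^2 + 1) * (n + 1) ≤ 2 ^ n := by
      rw [div_mul_eq_mul_div, div_le_iff₀ hpos]
      have hn1 : (1:ℝ) ≤ (n:ℝ) := by exact_mod_cast hn
      have hle : (n:ℝ) + 1 ≤ (n:ℝ)^2 + 1 := by nlinarith
      have := mul_le_mul_of_nonneg_left hle (le_of_lt (pow_pos (by norm_num : (0:ℝ) < 2) n))
      linarith
    linarith
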